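/- Let M be a topological space, φ : M × ℝ → M a flow on M, and W ⊂ M an open set such that every egress point of W is a strict egress point (W⁻ = W⁻⁻). Then the egress-time function σ is continuous on the set {x ∈ W ∪ W⁻ : σ(x) < ∞}; in particular, if every point of a set Γ ⊂ W ∪ W⁻ has finite egress time, then σ : Γ → ℝ is continuous. -/
import Mathlib

open scoped ENNReal
open Filter Set Topology

/-- The set of egress points of an open set `W` with respect to the flow `φ`. -/
def flowEgress {M : Type*} [TopologicalSpace M] (φ : M → ℝ → M) (W : Set M) : Set M :=
  {x ∈ frontier W | ∃ ε > (0 : ℝ), ∀ t ∈ Set.Ioo (-ε) (0 : ℝ), φ x t ∈ W}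

/-- The set of strict egress points of `W` with respect to the flow `φ`. -/
def flowStrictEgress {M : Type*} [TopologicalSpace M] (φ : M → ℝ → M) (W : Set M) : Set M :=
  {x ∈ flowEgress φ W | ∃ ε > (0 : ℝ), ∀ t ∈ Set.Ioo (0 : ℝ) ε, φ x t ∉ W ∪ frontier W}

/-- The egress time `σ(x) = sup {τ ≥ 0 : φ x t ∈ W for all t ∈ [0, τ)}`, valued in `ℝ≥0∞`. -/
noncomputable def flowEgressTime {M : Type*} [TopologicalSpace M] (φ : M → ℝ → M)
    (W : Set M) (x : M) : ℝ≥0∞ :=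
  sSup {τ : ℝ≥0∞ | ∀ t : ℝ, 0 ≤ t → ENNReal.ofReal t < τ → φ x t ∈ W}

section aux
variable {M : Type*} [TopologicalSpace M] {φ : M → ℝ → M} {W : Set M}

lemma mem_of_lt_egressTime {x : M} {t : ℝ} (ht : 0 ≤ t)
    (h : ENNReal.ofReal t < flowEgressTime φ W x) : φ x t ∈ W := by
  obtain ⟨τ, hτ, hlt⟩ := lt_sSup_iff.mp h
  exact hτ t ht hlt

lemma le_egressTime {x : M} {a : ℝ}
    (h : ∀ t, 0 ≤ t → t < a → φ x t ∈ W) :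
    ENNReal.ofReal a ≤ flowEgressTime φ W x :=
  le_sSup fun t ht hlt =>
    h t ht (by rwa [ENNReal.ofReal_lt_ofReal_iff_of_nonneg ht] at hlt)

lemma egressTime_pos (hφcont : Continuous fun p : M × ℝ => φ p.1 p.2)
    (hφ0 : ∀ x, φ x 0 = x) (hWopen : IsOpen W) {x : M} (hx : x ∈ W) :
    0 < flowEgressTime φ W x := by
  have hc : Continuous fun t : ℝ => φ x t :=
    hφcont.comp (continuous_const.prodMk continuous_id)
  have h0 : (0 : ℝ) ∈ {t : ℝ | φ x t ∈ W} := by simp [hφ0, hx]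
  obtain ⟨δ, hδ, hball⟩ := Metric.isOpen_iff.mp (hWopen.preimage hc) 0 h0
  refine lt_of_lt_of_le (ENNReal.ofReal_pos.mpr hδ)
    (le_egressTime fun t ht htδ => hball ?_)
  simp only [Metric.mem_ball, Real.dist_eq, sub_zero]
  rwa [abs_of_nonneg ht]

lemma egressTime_eq_zero (hφ0 : ∀ x, φ x 0 = x) (hWopen : IsOpen W) {x : M}
    (hx : x ∈ flowEgress φ W) : flowEgressTime φ W x = 0 := by
  by_contra h
  have hxW : φ x 0 ∈ W :=
    mem_of_lt_egressTime le_rfl (by simpa using pos_iff_ne_zero.mpr h)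
  rw [hφ0] at hxW
  exact (hWopen.frontier_eq ▸ hx.1).2 hxW

lemma egressTime_continuousAt
    (hφcont : Continuous fun p : M × ℝ => φ p.1 p.2)
    (hφ0 : ∀ x, φ x 0 = x)
    (hφadd : ∀ x t s, φ x (t + s) = φ (φ x t) s)
    (hWopen : IsOpen W)
    (hWeq : flowEgress φ W = flowStrictEgress φ W)
    {x : M} (hx : x ∈ W ∪ flowEgress φ W) (hfin : flowEgressTime φ W x ≠ ⊤) :
    ContinuousAt (fun x => (flowEgressTime φ W x).toReal) x := by
  set s : ℝ := (flowEgressTime φ W x).toReal with hsdef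
  have hs0 : 0 ≤ s := ENNReal.toReal_nonneg
  have hσx : flowEgressTime φ W x = ENNReal.ofReal s := (ENNReal.ofReal_toReal hfin).symm
  -- points strictly before the egress time are in W
  have hW_sub : ∀ t, 0 ≤ t → t < s → φ x t ∈ W := by
    intro t ht hts
    refine mem_of_lt_egressTime ht ?_
    rw [hσx]
    exact (ENNReal.ofReal_lt_ofReal_iff_of_nonneg ht).mpr hts
  -- `φ x s` is an egress point
  have hegress : φ x s ∈ flowEgress φ W := by
    rcases hx with hxW | hxE
    · have hspos : 0 < s :=
        ENNReal.toReal_pos (egressTime_pos hφcont hφ0 hWopen hxW).ne' hfin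
      have hc : Continuous fun t : ℝ => φ x t :=
        hφcont.comp (continuous_const.prodMk continuous_id)
      have hnotW : φ x s ∉ W := by
        intro hmem
        obtain ⟨δ, hδ, hball⟩ :=
          Metric.isOpen_iff.mp (hWopen.preimage hc) s hmem
        have : ENNReal.ofReal (s + δ) ≤ flowEgressTime φ W x := by
          refine le_egressTime fun t ht htsδ => ?_
          rcases lt_or_ge t s with h | h
          · exact hW_sub t ht h
          · exact hball (by
              simp only [Metric.mem_ball, Real.dist_eq]
              rw [abs_of_nonneg (by linarith)]; linarith)
        rw [hσx, ENNReal.ofReal_le_ofReal_iff hs0] at this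
        linarith
      have hclos : φ x s ∈ closure W := by
        have htd : Tendsto (fun t : ℝ => φ x t) (𝓝[<] s) (𝓝 (φ x s)) :=
          (hc.tendsto s).mono_left nhdsWithin_le_nhds
        refine mem_closure_of_tendsto htd ?_
        filter_upwards [self_mem_nhdsWithin,
          eventually_nhdsWithin_of_eventually_nhds
            (eventually_gt_nhds hspos)] with t ht1 ht2
        exact hW_sub t ht2.le ht1
      refine ⟨hWopen.frontier_eq ▸ ⟨hclos, hnotW⟩, s, hspos, fun t ht => ?_⟩
      rw [← hφadd]
      exact hW_sub (s + t) (by linarith [ht.1]) (by linarith [ht.2])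
    · have : flowEgressTime φ W x = 0 := egressTime_eq_zero hφ0 hWopen hxE
      have hs : s = 0 := by rw [hsdef, this]; simp
      rw [hs, hφ0]
      exact hxE
  -- strict egress
  obtain ⟨_, ε₀, hε₀, hout⟩ : φ x s ∈ flowStrictEgress φ W := hWeq ▸ hegress
  -- continuity
  rw [ContinuousAt, Metric.tendsto_nhds]
  intro ε hε
  set δ : ℝ := min (ε / 2) (ε₀ / 2) with hδdef
  have hδpos : 0 < δ := lt_min (by linarith) (by linarith)
  have hδε : δ < ε := (min_le_left _ _).trans_lt (by linarith)
  have hδε₀ : δ < ε₀ := (min_le_right _ _).trans_lt (by linarith)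
  -- upper bound, eventually
  have hxout : φ x (s + δ) ∉ closure W := by
    have := hout δ ⟨hδpos, hδε₀⟩
    rw [← hφadd, ← closure_eq_self_union_frontier] at this
    exact this
  have hupper : ∀ᶠ x' in 𝓝 x, flowEgressTime φ W x' ≤ ENNReal.ofReal (s + δ) := by
    have hcm : Continuous fun x' : M => φ x' (s + δ) :=
      hφcont.comp (continuous_id.prodMk continuous_const)
    have hUopen : IsOpen ((fun x' => φ x' (s + δ)) ⁻¹' (closure W)ᶜ) :=
      isClosed_closure.isOpen_compl.preimage hcm
    filter_upwards [hUopen.mem_nhds hxout] with x' hx'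
    by_contra hlt
    exact hx' (subset_closure (mem_of_lt_egressTime (by linarith) (not_le.mp hlt)))
  -- lower bound, eventually
  have hlower : ∀ᶠ x' in 𝓝 x, ∀ t, 0 ≤ t → t < s - δ → φ x' t ∈ W := by
    rcases le_or_gt (s - δ) 0 with hsδ | hsδ
    · exact Eventually.of_forall fun x' t ht hts => absurd (lt_of_le_of_lt ht hts)
        (by linarith)
    · have := (isCompact_Icc (a := (0:ℝ)) (b := s - δ)).eventually_forall_of_forall_eventually
        (x₀ := x) (P := fun x' t => φ x' t ∈ W) ?_
      · filter_upwards [this] with x' h t ht hts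
        exact h t ⟨ht, by linarith⟩
      · intro t ht
        have : φ x t ∈ W := hW_sub t ht.1 (by linarith [ht.2])
        exact hφcont.continuousAt.eventually_mem (hWopen.mem_nhds this)
  filter_upwards [hupper, hlower] with x' hup hlow
  have hfin' : flowEgressTime φ W x' ≠ ⊤ := fun h => by simp [h] at hup
  have h1 : (flowEgressTime φ W x').toReal ≤ s + δ := by
    have := ENNReal.toReal_mono ENNReal.ofReal_ne_top hup
    rwa [ENNReal.toReal_ofReal (by linarith)] at this
  have h2 : s - δ ≤ (flowEgressTime φ W x').toReal := by
    rcases le_or_gt (s - δ) 0 with hsδ | hsδ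
    · exact hsδ.trans ENNReal.toReal_nonneg
    · have hle : ENNReal.ofReal (s - δ) ≤ flowEgressTime φ W x' := le_egressTime hlow
      have := ENNReal.toReal_mono hfin' hle
      rwa [ENNReal.toReal_ofReal hsδ.le] at this
  rw [Real.dist_eq, abs_sub_lt_iff]
  constructor <;> linarith

end aux

theorem egressTime_continuousOn
    {M : Type*} [TopologicalSpace M] (φ : M → ℝ → M)
    (hφcont : Continuous fun p : M × ℝ => φ p.1 p.2)
    (hφ0 : ∀ x, φ x 0 = x)
    (hφadd : ∀ x t s, φ x (t + s) = φ (φ x t) s)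
    (W : Set M) (hWopen : IsOpen W)
    (hWeq : flowEgress φ W = flowStrictEgress φ W) :
    ContinuousOn (fun x => (flowEgressTime φ W x).toReal)
      {x | x ∈ W ∪ flowEgress φ W ∧ flowEgressTime φ W x ≠ ⊤} ∧
    ∀ Γ : Set M, Γ ⊆ W ∪ flowEgress φ W → (∀ x ∈ Γ, flowEgressTime φ W x ≠ ⊤) →
      ContinuousOn (fun x => (flowEgressTime φ W x).toReal) Γ := by
  constructor
  · exact fun x hx =>
      (egressTime_continuousAt hφcont hφ0 hφadd hWopen hWeq hx.1 hx.2).continuousWithinAt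
  · exact fun Γ hΓ hfin x hx =>
      (egressTime_continuousAt hφcont hφ0 hφadd hWopen hWeq (hΓ hx) (hfin x hx)).continuousWithinAt
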